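/- m-products are projective unitary invariants up to conjugation: for vectors u_1, …, u_m in ℍ^d define Δ(u_1, …, u_m) := ⟨u_2,u_1⟩·⟨u_3,u_2⟩⋯⟨u_1,u_m⟩ (an ordered product of quaternions). If U ∈ ℍ^{d×d} is unitary (Uᴴ·U = I_d) and α_1, …, α_m ∈ ℍ are unit quaternions (|α_s| = 1), then Δ((U·u_1)·α_1, (U·u_2)·α_2, …, (U·u_m)·α_m) = conj(α_1) · Δ(u_1, u_2, …, u_m) · α_1. -/

import Mathlib

open Quaternion Matrix BigOperators

/-- Euclidean inner product on `ℍ^d`: `⟨v,w⟩ = ∑ i, conj (w i) * v i`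
(linear in the first variable). -/
noncomputable def qip {d : ℕ} (v w : Fin d → ℍ[ℝ]) : ℍ[ℝ] :=
  ∑ i, star (w i) * v i

/-- The `m`-product of a list of vectors `[u_1, …, u_m]` in `ℍ^d`:
`Δ(u_1,…,u_m) = ⟨u_2,u_1⟩·⟨u_3,u_2⟩⋯⟨u_1,u_m⟩`,
an ordered product of quaternions. -/
noncomputable def mprod {d : ℕ} (l : List (Fin d → ℍ[ℝ])) : ℍ[ℝ] :=
  (((l.rotate 1).zip l).map fun p => qip p.1 p.2).prod

lemma qip_dot {d : ℕ} (v w : Fin d → ℍ[ℝ]) : qip v w = star w ⬝ᵥ v := by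
  simp [qip, dotProduct]

lemma qip_unitary {d : ℕ} (U : Matrix (Fin d) (Fin d) ℍ[ℝ]) (hU : Uᴴ * U = 1)
    (v w : Fin d → ℍ[ℝ]) : qip (U.mulVec v) (U.mulVec w) = qip v w := by
  rw [qip_dot, qip_dot, Matrix.star_mulVec, Matrix.dotProduct_mulVec,
    Matrix.vecMul_vecMul, hU, Matrix.vecMul_one]

lemma qip_smul {d : ℕ} (v w : Fin d → ℍ[ℝ]) (a b : ℍ[ℝ]) :
    qip (fun i => v i * a) (fun i => w i * b) = star b * qip v w * a := by
  simp only [qip, Finset.mul_sum, Finset.sum_mul, StarMul.star_mul]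
  exact Finset.sum_congr rfl fun i _ => by simp [mul_assoc]

lemma zip_rotate_ofFn {X : Type*} (n : ℕ) (v : Fin (n + 1) → X) :
    ((List.ofFn v).rotate 1).zip (List.ofFn v) = List.ofFn fun s => (v (s + 1), v s) := by
  apply List.ext_getElem
  · simp [List.length_zip]
  · intro i h1 h2
    have hi : i < n + 1 := by simpa using h2
    have hr : i < ((List.ofFn v).rotate 1).length := by simpa using hi
    rw [List.getElem_zip, List.getElem_rotate]
    simp only [List.getElem_ofFn, List.length_ofFn, Prod.mk.injEq]
    refine ⟨?_, trivial⟩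
    congr 1
    ext
    simp [Fin.add_def]

lemma mprod_ofFn {d n : ℕ} (v : Fin (n + 1) → (Fin d → ℍ[ℝ])) :
    mprod (List.ofFn v) = (List.ofFn fun s => qip (v (s + 1)) (v s)).prod := by
  rw [mprod, zip_rotate_ofFn, List.map_ofFn]
  rfl

lemma tele (q a : ℕ → ℍ[ℝ]) (ha : ∀ s, a s * star (a s) = 1)
    (ha' : ∀ s, star (a s) * a s = 1) :
    ∀ n, (List.ofFn fun s : Fin n => star (a s) * q s * a (s + 1)).prod
      = star (a 0) * (List.ofFn fun s : Fin n => q (s : ℕ)).prod * a n := by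
  intro n
  induction n with
  | zero =>
    simp only [List.ofFn_zero, List.prod_nil, mul_one]
    exact (ha' 0).symm
  | succ n ih =>
    rw [List.ofFn_succ', List.ofFn_succ']
    simp only [List.concat_eq_append, List.prod_append, List.prod_cons, List.prod_nil,
      Fin.coe_castSucc, Fin.val_last, mul_one]
    rw [ih]
    have h : a n * (star (a n) * (q n * a (n + 1))) = q n * a (n + 1) := by
      rw [← mul_assoc, ha n, one_mul]
    simp only [mul_assoc, h]

theorem mprod_projective_unitary_invariant (d m : ℕ)
    (u : Fin (m + 1) → (Fin d → ℍ[ℝ]))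
    (U : Matrix (Fin d) (Fin d) ℍ[ℝ]) (hU : Uᴴ * U = 1)
    (α : Fin (m + 1) → ℍ[ℝ]) (hα : ∀ s, Quaternion.normSq (α s) = 1) :
    mprod (List.ofFn fun s => fun i => (U.mulVec (u s)) i * α s) =
      star (α 0) * mprod (List.ofFn u) * α 0 := by
  open Fin.NatCast in set A : ℕ → ℍ[ℝ] := fun n => α (n : Fin (m + 1)) with hA
  open Fin.NatCast in set Q : ℕ → ℍ[ℝ] := fun n => qip (u ((n : Fin (m + 1)) + 1)) (u (n : Fin (m + 1))) with hQ
  open Fin.NatCast in have key : ∀ s : Fin (m + 1), ((s : ℕ) : Fin (m + 1)) = s := fun s => Fin.cast_val_eq_self s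
  open Fin.NatCast in have key2 : ∀ s : Fin (m + 1), (((s : ℕ) + 1 : ℕ) : Fin (m + 1)) = s + 1 := by intro s; push_cast [key]; ring
  have ha : ∀ s, A s * star (A s) = 1 := by
    intro s
    show α _ * star (α _) = 1
    rw [Quaternion.self_mul_star, hα]
    simp
  have ha' : ∀ s, star (A s) * A s = 1 := by
    intro s
    show star (α _) * α _ = 1
    rw [Quaternion.star_mul_self, hα]
    simp
  rw [mprod_ofFn, mprod_ofFn]
  have lhs_eq : (List.ofFn fun s : Fin (m + 1) =>
      qip (fun i => U.mulVec (u (s + 1)) i * α (s + 1)) (fun i => U.mulVec (u s) i * α s))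
      = List.ofFn fun s : Fin (m + 1) => star (A s) * Q s * A ((s : ℕ) + 1) := by
    congr 1
    funext s
    rw [qip_smul, qip_unitary U hU]
    simp only [hA, hQ, key, key2]
  have rhs_eq : (List.ofFn fun s : Fin (m + 1) => qip (u (s + 1)) (u s))
      = List.ofFn fun s : Fin (m + 1) => Q (s : ℕ) := by
    congr 1
    funext s
    simp only [hQ, key, key2]
  rw [lhs_eq, rhs_eq, tele Q A ha ha' (m + 1)]
  have hA0 : A 0 = α 0 := by simp [hA]
  have hAm : A (m + 1) = α 0 := by
    simp only [hA]
    congr 1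
    ext
    simp
  rw [hA0, hAm]
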